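/- Let G be a graph on n vertices and let (T,X) be a tree decomposition of G of width at most t−1. For every integer m with 1 ≤ m ≤ n and every real c with 0 < c < 1, there is a cut (B,W) in G with c·m < |B| ≤ m and e_G(B,W) ≤ ⌈log₂(1/(1−c))⌉·t·Δ(G), where Δ(G) is the maximum degree of G. -/

import Mathlib

open scoped Classical

namespace MinBisection

noncomputable section

variable {V ι : Type*}

/-- The number of edges of `G` with one endpoint in `B` and the other outside of `B`,
i.e., the width `e_G(B, W)` of the cut `(B, W)` where `W` is the complement of `B`. -/
def cutWidth (G : SimpleGraph V) (B : Finset V) : ℕ :=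
  Nat.card {e : Sym2 V // ∃ x y, G.Adj x y ∧ x ∈ B ∧ y ∉ B ∧ e = s(x, y)}

/-- The number of edges of `G` whose endpoints lie in two different parts of the
partition `(B, W, Z)` of the vertex set. -/
def cutWidth3 (G : SimpleGraph V) (B W Z : Finset V) : ℕ :=
  Nat.card {e : Sym2 V // ∃ x y, G.Adj x y ∧ e = s(x, y) ∧
    ¬ ((x ∈ B ∧ y ∈ B) ∨ (x ∈ W ∧ y ∈ W) ∨ (x ∈ Z ∧ y ∈ Z))}

/-- `(B, Bᶜ)` is a bisection: the sizes of the two parts differ by at most one. -/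
def IsBisection [Fintype V] (B : Finset V) : Prop :=
  B.card ≤ Bᶜ.card + 1 ∧ Bᶜ.card ≤ B.card + 1

/-- The minimum bisection width `MinBis(G)`. -/
def minBis (G : SimpleGraph V) [Fintype V] : ℕ :=
  sInf {k | ∃ B : Finset V, IsBisection B ∧ cutWidth G B = k}

/-- The maximum degree `Δ(G)`. -/
def maxDeg (G : SimpleGraph V) [Fintype V] : ℕ :=
  Finset.univ.sup fun v => Nat.card {u // G.Adj v u}

/-- The number of vertices on a longest path in `G`. -/
def longestPathCard (G : SimpleGraph V) : ℕ :=
  sSup {k | ∃ (u v : V) (p : G.Walk u v), p.IsPath ∧ k = p.support.length}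

/-- The relative diameter `diam*` of a connected graph: the number of vertices on a
longest path divided by the number of vertices. -/
def diamStar (G : SimpleGraph V) [Fintype V] : ℝ :=
  (longestPathCard G : ℝ) / (Fintype.card V : ℝ)

/-- The number of vertices on a longest path contained in the connected component `c`. -/
def compLongestPathCard (G : SimpleGraph V) (c : G.ConnectedComponent) : ℕ :=
  sSup {k | ∃ (u v : V) (p : G.Walk u v), p.IsPath ∧ G.connectedComponentMk u = c ∧
    k = p.support.length}

/-- The relative diameter `diam*` of a forest: the sum over all connected components of the
number of vertices on a longest path in the component, divided by the number of vertices. -/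
def forestDiamStar (G : SimpleGraph V) [Fintype V] : ℝ :=
  letI : Fintype G.ConnectedComponent := Fintype.ofFinite _
  (∑ c : G.ConnectedComponent, (compLongestPathCard G c : ℝ)) / (Fintype.card V : ℝ)

/-- `(T, X)` is a tree decomposition of `G`. -/
structure IsTreeDecomp (G : SimpleGraph V) (T : SimpleGraph ι) (X : ι → Finset V) : Prop where
  isTree : T.IsTree
  mem_cluster : ∀ v : V, ∃ i, v ∈ X i
  edge_cluster : ∀ ⦃u v : V⦄, G.Adj u v → ∃ i, u ∈ X i ∧ v ∈ X i
  inter_subset : ∀ ⦃i j : ι⦄ (p : T.Walk i j), p.IsPath → ∀ h ∈ p.support, X i ∩ X j ⊆ X h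

/-- The weight `w(P, X)` of a path `p` of the tree `T` with respect to the clusters `X`:
the cardinality of the union of the clusters along the path. -/
def walkWeight (X : ι → Finset V) {T : SimpleGraph ι} {i j : ι} (p : T.Walk i j) : ℕ :=
  (p.support.toFinset.biUnion X).card

/-- The relative weight `r(T, X)` of a heaviest path in the tree decomposition `(T, X)`. -/
def rTD [Fintype V] (T : SimpleGraph ι) (X : ι → Finset V) : ℝ :=
  (↑(sSup {w : ℕ | ∃ (i j : ι) (p : T.Walk i j), p.IsPath ∧ w = walkWeight X p}) : ℝ) /
    (Fintype.card V : ℝ)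

/-- The path `p` is nonredundant: one of its two ends `i` is a nonredundant end, i.e.,
`X i ≠ ∅` and no cluster along the path contains the previous one when traversed from `i`. -/
def NonredundantPath (X : ι → Finset V) {T : SimpleGraph ι} {i j : ι} (p : T.Walk i j) : Prop :=
  (X i ≠ ∅ ∧ List.Chain' (fun a b => ¬ X b ⊆ X a) p.support) ∨
  (X j ≠ ∅ ∧ List.Chain' (fun a b => ¬ X b ⊆ X a) p.reverse.support)

/-- `R_i`: the set of vertices whose path node (first node along `p`, traversed from the
end `i₀`, whose cluster contains the vertex) is `i`. -/
def Rset (X : ι → Finset V) {T : SimpleGraph ι} {i₀ j₀ : ι} (p : T.Walk i₀ j₀) (i : ι) :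
    Set V :=
  {x | ∃ (k : ℕ) (hk : k < p.support.length), p.support.get ⟨k, hk⟩ = i ∧ x ∈ X i ∧
    ∀ (l : ℕ) (hl : l < k), x ∉ X (p.support.get ⟨l, hl.trans hk⟩)}

/-- `S_i`: the union of the clusters over the component `T_i` of `T - E(P)` containing `i`,
minus `R = ⋃_{h ∈ V(P)} X^h`. -/
def Sset (X : ι → Finset V) {T : SimpleGraph ι} {i₀ j₀ : ι} (p : T.Walk i₀ j₀) (i : ι) :
    Set V :=
  {x | (∃ j, (∃ q : T.Walk i j, ∀ e ∈ q.edges, e ∉ p.edges) ∧ x ∈ X j) ∧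
    ∀ h ∈ p.support, x ∉ X h}

end

end MinBisection

namespace MBAux
open Finset SimpleGraph
set_option linter.unusedSectionVars false
set_option linter.unusedVariables false


variable {ι : Type*}

def tdel (T : SimpleGraph ι) (i : ι) : SimpleGraph ι where
  Adj a b := T.Adj a b ∧ a ≠ i ∧ b ≠ i
  symm := ⟨fun _ _ ⟨h, ha, hb⟩ => ⟨h.symm, hb, ha⟩⟩
  loopless := ⟨fun a ⟨h, _, _⟩ => T.loopless.irrefl a h⟩

lemma tdel_support_ne {T : SimpleGraph ι} {i x y : ι} (w : (tdel T i).Walk x y)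
    (hx : x ≠ i) : i ∉ w.support := by
  induction w with
  | nil => simp [Ne.symm hx]
  | cons h w ih =>
    rw [Walk.support_cons, List.mem_cons]
    rintro (h' | hm)
    · exact hx h'.symm
    · exact ih h.2.2 hm

lemma reach_tdel_ne {T : SimpleGraph ι} {i x y : ι} (h : (tdel T i).Reachable x y)
    (hx : x ≠ i) : y ≠ i := by
  obtain ⟨w⟩ := h
  intro hy
  exact tdel_support_ne w hx (hy ▸ w.end_mem_support)

def walkToTdel {T : SimpleGraph ι} {i x y : ι} (w : T.Walk x y) (hs : i ∉ w.support) :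
    (tdel T i).Walk x y :=
  w.transfer (tdel T i) (by
    intro e he
    induction e with
    | h a b =>
      exact ⟨w.edges_subset_edgeSet he,
        fun h => hs (h ▸ w.fst_mem_support_of_mem_edges he),
        fun h => hs (h ▸ w.snd_mem_support_of_mem_edges he)⟩)

def tdelToTdel {T : SimpleGraph ι} {a b x y : ι} (w : (tdel T a).Walk x y)
    (hs : b ∉ w.support) : (tdel T b).Walk x y :=
  w.transfer (tdel T b) (by
    intro e he
    induction e with
    | h u v =>
      exact ⟨(w.edges_subset_edgeSet he).1,
        fun h => hs (h ▸ w.fst_mem_support_of_mem_edges he),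
        fun h => hs (h ▸ w.snd_mem_support_of_mem_edges he)⟩)

def tdelToWalk {T : SimpleGraph ι} {a x y : ι} (w : (tdel T a).Walk x y) : T.Walk x y :=
  w.transfer T (fun e he => by
    induction e with
    | h u v => exact (w.edges_subset_edgeSet he).1)

lemma tdelToWalk_support {T : SimpleGraph ι} {a x y : ι} (w : (tdel T a).Walk x y) :
    (tdelToWalk w).support = w.support := Walk.support_transfer _ _

lemma nbr_unique {T : SimpleGraph ι} (hT : T.IsTree) {i z w : ι}
    (h1 : T.Adj i z) (h2 : T.Adj i w) (hr : (tdel T i).Reachable z w) : z = w := by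
  obtain ⟨w0⟩ := hr
  have hp : w0.bypass.IsPath := w0.bypass_isPath
  have hi : i ∉ w0.bypass.support := fun hm =>
    tdel_support_ne w0 h1.ne' (w0.support_bypass_subset hm)
  set q : T.Walk z w := tdelToWalk w0.bypass with hqdef
  have hq : q.IsPath := by
    rw [Walk.isPath_def, tdelToWalk_support]
    exact hp.support_nodup
  have hiq : i ∉ q.support := by rw [hqdef, tdelToWalk_support]; exact hi
  let p1 : T.Path i w := ⟨Walk.cons h2 Walk.nil, by simp [h2.ne]⟩
  let p2 : T.Path i w := ⟨Walk.cons h1 q, hq.cons hiq⟩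
  have hpq : p1 = p2 := hT.IsAcyclic.path_unique p1 p2
  have hsupp : ([i, w] : List ι) = i :: q.support := by
    have h := congrArg (fun p : T.Path i w => p.1.support) hpq
    simpa [p1, p2, Walk.support_cons] using h
  have hqs : q.support = [w] := by injection hsupp with h1 h2; exact h2.symm
  have := q.support_eq_cons
  rw [hqs] at this
  injection this with h _
  exact h.symm

section Inner

variable {V : Type*} [Fintype V] [Fintype ι]

/-- The set of vertices (inside `U`) whose clusters live in the component of `T - i`
containing the neighbour `z` of `i`. -/
noncomputable def Cset (T : SimpleGraph ι) (Y : ι → Finset V) (U : Finset V) (i z : ι) : Finset V :=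
  U.filter (fun v => v ∉ Y i ∧ ∃ j, (tdel T i).Reachable z j ∧ v ∈ Y j)

variable {T : SimpleGraph ι} {Y : ι → Finset V} {U : Finset V}

lemma Cset_subset (i z : ι) : Cset T Y U i z ⊆ U := filter_subset _ _

lemma sep_bag (hT : T.IsTree)
    (hsep : ∀ ⦃a b : ι⦄ (p : T.Walk a b), p.IsPath → ∀ h ∈ p.support, Y a ∩ Y b ⊆ Y h)
    {u : V} {j k i : ι} (hj : u ∈ Y j) (hk : u ∈ Y k)
    (hn : ¬ (tdel T i).Reachable j k) : u ∈ Y i := by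
  by_cases hji : j = i
  · exact hji ▸ hj
  by_cases hki : k = i
  · exact hki ▸ hk
  obtain ⟨w⟩ := hT.isConnected.preconnected j k
  by_cases hip : i ∈ w.bypass.support
  · exact hsep w.bypass w.bypass_isPath i hip (mem_inter.mpr ⟨hj, hk⟩)
  · exact absurd ⟨walkToTdel w.bypass hip⟩ hn

lemma comp_bags (hT : T.IsTree)
    (hsep : ∀ ⦃a b : ι⦄ (p : T.Walk a b), p.IsPath → ∀ h ∈ p.support, Y a ∩ Y b ⊆ Y h)
    {i z : ι} {x : V} (hx : x ∈ Cset T Y U i z) {k : ι} (hk : x ∈ Y k) :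
    (tdel T i).Reachable z k := by
  obtain ⟨_, hxn, j, hr, hxj⟩ := mem_filter.mp hx
  by_contra hnr
  exact hxn (sep_bag hT hsep hxj hk (fun h => hnr (hr.trans h)))

lemma cset_edge {G : SimpleGraph V} (hT : T.IsTree)
    (hedge : ∀ ⦃x y : V⦄, G.Adj x y → x ∈ U → y ∈ U → ∃ k, x ∈ Y k ∧ y ∈ Y k)
    (hsep : ∀ ⦃a b : ι⦄ (p : T.Walk a b), p.IsPath → ∀ h ∈ p.support, Y a ∩ Y b ⊆ Y h)
    {i z : ι} {x y : V} (hx : x ∈ Cset T Y U i z) (hyU : y ∈ U) (hxy : G.Adj x y) :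
    y ∈ Cset T Y U i z ∨ y ∈ Y i := by
  obtain ⟨hxU, hxn, j, hr, hxj⟩ := mem_filter.mp hx
  by_cases hyi : y ∈ Y i
  · exact Or.inr hyi
  obtain ⟨k, hxk, hyk⟩ := hedge hxy hxU hyU
  exact Or.inl (mem_filter.mpr ⟨hyU, hyi, k, comp_bags hT hsep hx hxk, hyk⟩)

/-- Choice of a good node: all selected components are small, yet together with the
cluster of the node they cover at least `d` vertices. -/
lemma node_choice (hT : T.IsTree)
    (hmem : ∀ v ∈ U, ∃ j, v ∈ Y j)
    (hsep : ∀ ⦃a b : ι⦄ (p : T.Walk a b), p.IsPath → ∀ h ∈ p.support, Y a ∩ Y b ⊆ Y h)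
    (d : ℕ) (hdU : d ≤ U.card) :
    ∃ (i : ι) (A : Finset ι), (∀ z ∈ A, (Cset T Y U i z).card < d) ∧
      d ≤ (Y i ∪ A.biUnion (Cset T Y U i)).card := by
  have hne : Nonempty ι := hT.isConnected.nonempty
  set C := Cset T Y U with hC
  set P : Finset (ι × ι) :=
    Finset.univ.filter (fun p => T.Adj p.1 p.2 ∧ d ≤ (C p.1 p.2).card) with hP
  rcases P.eq_empty_or_nonempty with hPe | hPne
  · -- no big component anywhere: use an arbitrary node with all its neighbours
    obtain ⟨i⟩ := hne
    refine ⟨i, T.neighborFinset i, ?_, ?_⟩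
    · intro z hz
      by_contra hcon
      push_neg at hcon
      have : (i, z) ∈ P := mem_filter.mpr ⟨mem_univ _, (mem_neighborFinset _ _ _).mp hz, hcon⟩
      simp [hPe] at this
    · refine hdU.trans (card_le_card ?_)
      intro v hv
      obtain ⟨j, hj⟩ := hmem v hv
      by_cases hvi : v ∈ Y i
      · exact mem_union_left _ hvi
      have hji : j ≠ i := fun h => hvi (h ▸ hj)
      obtain ⟨w⟩ := hT.isConnected.preconnected i j
      have hp := w.bypass_isPath
      cases hb : w.bypass with
      | nil => exact absurd rfl hji
      | cons h p' =>
        rename_i z₀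
        have hpath : (Walk.cons h p').IsPath := hb ▸ hp
        have hip' : i ∉ p'.support := ((Walk.cons_isPath_iff _ _).mp hpath).2
        refine mem_union_right _ (mem_biUnion.mpr ⟨z₀, (mem_neighborFinset _ _ _).mpr h, ?_⟩)
        exact mem_filter.mpr ⟨hv, hvi, j, ⟨walkToTdel p' hip'⟩, hj⟩
  · -- minimal big component
    obtain ⟨⟨i, i'⟩, hmemP, hmin⟩ :=
      P.exists_min_image (fun p => (univ.filter ((tdel T p.1).Reachable p.2 ·)).card) hPne
    obtain ⟨-, hadj, hdC⟩ := mem_filter.mp hmemP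
    refine ⟨i', T.neighborFinset i' \ {i}, ?_, ?_⟩
    · intro z hz
      obtain ⟨hz1, hz2⟩ := mem_sdiff.mp hz
      have hzadj : T.Adj i' z := (mem_neighborFinset _ _ _).mp hz1
      have hzi : z ≠ i := by simpa using hz2
      by_contra hcon
      push_neg at hcon
      have hzP : (i', z) ∈ P := mem_filter.mpr ⟨mem_univ _, hzadj, hcon⟩
      have hle := hmin _ hzP
      have hsub : univ.filter ((tdel T i').Reachable z ·) ⊂
          univ.filter ((tdel T i).Reachable i' ·) := by
        constructor
        · intro j hj
          have hrj : (tdel T i').Reachable z j := (mem_filter.mp hj).2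
          have hnzi : ¬ (tdel T i').Reachable z i := fun h =>
            hzi (nbr_unique hT hzadj hadj.symm h)
          obtain ⟨w0⟩ := hrj
          have hiw : i ∉ w0.support := fun hm => hnzi ⟨w0.takeUntil i hm⟩
          have hadj' : (tdel T i).Adj i' z := ⟨hzadj, hadj.ne', hzi⟩
          exact mem_filter.mpr ⟨mem_univ _, ⟨Walk.cons hadj' (tdelToTdel w0 hiw)⟩⟩
        · intro hsub'
          have h1 : i' ∈ univ.filter ((tdel T i).Reachable i' ·) :=
            mem_filter.mpr ⟨mem_univ _, Reachable.refl _⟩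
          have h2 := (mem_filter.mp (hsub' h1)).2
          exact (reach_tdel_ne h2 hzadj.ne') rfl
      exact absurd (card_lt_card hsub) (not_lt.mpr hle)
    · refine hdC.trans (card_le_card ?_)
      intro v hv
      obtain ⟨hvU, hvnYi, j, hr, hvj⟩ := mem_filter.mp hv
      by_cases hvi' : v ∈ Y i'
      · exact mem_union_left _ hvi'
      have hji' : j ≠ i' := fun h => hvi' (h ▸ hvj)
      obtain ⟨w0⟩ := hr
      have hp := w0.bypass_isPath
      cases hb : w0.bypass with
      | nil => exact absurd rfl hji'
      | cons h p' =>
        rename_i z₀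
        have hpath : (Walk.cons h p').IsPath := hb ▸ hp
        have hi'p' : i' ∉ p'.support := ((Walk.cons_isPath_iff _ _).mp hpath).2
        refine mem_union_right _ (mem_biUnion.mpr ⟨z₀, ?_, ?_⟩)
        · exact mem_sdiff.mpr ⟨(mem_neighborFinset _ _ _).mpr h.1, by simpa using h.2.2⟩
        · exact mem_filter.mpr ⟨hvU, hvi', j, ⟨tdelToTdel p' hi'p'⟩, hvj⟩

/-- **Inner lemma**: a single low-boundary cut of size in `(d/2, d]` inside `U`. -/
theorem inner_rel (G : SimpleGraph V) (hT : T.IsTree)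
    (hYU : ∀ i, Y i ⊆ U)
    (hmem : ∀ v ∈ U, ∃ j, v ∈ Y j)
    (hedge : ∀ ⦃x y : V⦄, G.Adj x y → x ∈ U → y ∈ U → ∃ k, x ∈ Y k ∧ y ∈ Y k)
    (hsep : ∀ ⦃a b : ι⦄ (p : T.Walk a b), p.IsPath → ∀ h ∈ p.support, Y a ∩ Y b ⊆ Y h)
    (d : ℕ) (hd1 : 1 ≤ d) (hdU : d ≤ U.card) :
    ∃ (B : Finset V) (i : ι), B ⊆ U ∧ d < 2 * B.card ∧ B.card ≤ d ∧
      ∀ ⦃x y : V⦄, G.Adj x y → x ∈ B → y ∈ U → y ∉ B → (x ∈ Y i ∨ y ∈ Y i) := by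
  obtain ⟨i, A, hsmall, hcov⟩ := node_choice hT hmem hsep d hdU
  set C := Cset T Y U i with hCdef
  by_cases hbig : ∃ z ∈ A, d < 2 * (C z).card
  · obtain ⟨z, hzA, hz2⟩ := hbig
    refine ⟨C z, i, Cset_subset i z, hz2, le_of_lt (hsmall z hzA), ?_⟩
    intro x y hxy hxB hyU hyB
    rcases cset_edge hT hedge hsep hxB hyU hxy with h | h
    · exact absurd h hyB
    · exact Or.inr h
  · push_neg at hbig
    set F := A.powerset.filter (fun s => (s.biUnion C).card ≤ d) with hF
    have hFne : F.Nonempty :=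
      ⟨∅, mem_filter.mpr ⟨empty_mem_powerset _, by simp⟩⟩
    obtain ⟨A', hA'F, hmax⟩ := F.exists_max_image card hFne
    have hA'A : A' ⊆ A := mem_powerset.mp (mem_filter.mp hA'F).1
    have hA'le : (A'.biUnion C).card ≤ d := (mem_filter.mp hA'F).2
    have hBU : A'.biUnion C ⊆ U := by
      intro v hv
      obtain ⟨z, _, hvz⟩ := mem_biUnion.mp hv
      exact Cset_subset i z hvz
    have hcut : ∀ (A'' : Finset ι), A'' ⊆ A → ∀ ⦃x y : V⦄, G.Adj x y →
        x ∈ A''.biUnion C → y ∈ U → y ∉ A''.biUnion C → (x ∈ Y i ∨ y ∈ Y i) := by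
      intro A'' _ x y hxy hxB hyU hyB
      obtain ⟨z, hzA'', hxz⟩ := mem_biUnion.mp hxB
      rcases cset_edge hT hedge hsep hxz hyU hxy with h | h
      · exact absurd (mem_biUnion.mpr ⟨z, hzA'', h⟩) hyB
      · exact Or.inr h
    by_cases hAA : A' = A
    · subst hAA
      -- pad with vertices of `Y i`
      have h2 : (Y i ∪ A'.biUnion C).card ≤ (Y i \ A'.biUnion C).card + (A'.biUnion C).card := by
        rw [← sdiff_union_self_eq_union]
        exact card_union_le _ _
      obtain ⟨S, hS, hScard⟩ := Finset.exists_subset_card_eq (s := Y i \ A'.biUnion C)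
        (n := d - (A'.biUnion C).card) (by omega)
      have hdisj : Disjoint (A'.biUnion C) S := by
        rw [disjoint_right]
        intro a haS haB
        exact (mem_sdiff.mp (hS haS)).2 haB
      have hcard : (A'.biUnion C ∪ S).card = d := by
        rw [card_union_of_disjoint hdisj, hScard]
        omega
      refine ⟨A'.biUnion C ∪ S, i, ?_, by omega, le_of_eq hcard, ?_⟩
      · exact union_subset hBU ((hS.trans (sdiff_subset)).trans (hYU i))
      · intro x y hxy hxB hyU hyB
        rcases mem_union.mp hxB with hx | hx
        · exact hcut A' hA'A hxy hx hyU (fun hc => hyB (mem_union_left _ hc))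
        · exact Or.inl (mem_sdiff.mp (hS hx)).1
    · have hss : A' ⊂ A := Finset.ssubset_iff_subset_ne.mpr ⟨hA'A, hAA⟩
      obtain ⟨z, hzA, hzA'⟩ := exists_of_ssubset hss
      have hnot : ¬ ((insert z A').biUnion C).card ≤ d := by
        intro hle
        have hmem' : insert z A' ∈ F :=
          mem_filter.mpr ⟨mem_powerset.mpr (insert_subset hzA hA'A), hle⟩
        have := hmax _ hmem'
        rw [card_insert_of_notMem hzA'] at this
        omega
      have hd2 : d < ((insert z A').biUnion C).card := not_le.mp hnot
      have h3 : d < (C z).card + (A'.biUnion C).card := by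
        refine lt_of_lt_of_le ?_ (card_union_le _ _)
        rw [← biUnion_insert]
        exact hd2
      have h4 := hbig z hzA
      refine ⟨A'.biUnion C, i, hBU, by omega, hA'le, hcut A' hA'A⟩

end Inner


end MBAux

namespace MinBisection
open Finset SimpleGraph
set_option linter.unusedSectionVars false

section Count


variable {V : Type*} [Fintype V] (G : SimpleGraph V)

lemma cutWidth_eq_card (B : Finset V) : cutWidth G B =
    (Finset.univ.filter
      (fun e : Sym2 V => ∃ x y, G.Adj x y ∧ x ∈ B ∧ y ∉ B ∧ e = s(x, y))).card := by
  rw [cutWidth, Nat.card_eq_fintype_card]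
  convert Fintype.card_subtype _

lemma cutWidth_empty : cutWidth G ∅ = 0 := by
  haveI : IsEmpty {e : Sym2 V // ∃ x y, G.Adj x y ∧ x ∈ (∅ : Finset V) ∧ y ∉ (∅ : Finset V)
      ∧ e = s(x, y)} := ⟨fun e => by obtain ⟨x, y, _, hx, _⟩ := e.2; simp at hx⟩
  rw [cutWidth]
  exact Nat.card_of_isEmpty

lemma degree_le_maxDeg (v : V) : G.degree v ≤ maxDeg G := by
  have h : Nat.card {u // G.Adj v u} = G.degree v := by
    rw [Nat.card_eq_fintype_card]
    convert Fintype.card_subtype (G.Adj v) using 1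
    rw [← card_neighborFinset_eq_degree]
    congr 1
    ext u
    simp [mem_neighborFinset]
  rw [← h, maxDeg]
  exact Finset.le_sup (f := fun v => Nat.card {u // G.Adj v u}) (mem_univ v)

lemma card_filter_le_of_incident (A : Finset V) (P : Sym2 V → Prop)
    (h : ∀ e, P e → ∃ x y, G.Adj x y ∧ e = s(x, y) ∧ (x ∈ A ∨ y ∈ A)) :
    (Finset.univ.filter P).card ≤ A.card * maxDeg G := by
  have hsub : Finset.univ.filter P ⊆ A.biUnion (fun v => G.incidenceFinset v) := by
    intro e he
    obtain ⟨x, y, hadj, rfl, hxy⟩ := h e (mem_filter.mp he).2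
    rcases hxy with hx | hy
    · refine mem_biUnion.mpr ⟨x, hx, ?_⟩
      rw [mem_incidenceFinset, mk'_mem_incidenceSet_left_iff]
      exact hadj
    · refine mem_biUnion.mpr ⟨y, hy, ?_⟩
      rw [mem_incidenceFinset, mk'_mem_incidenceSet_right_iff]
      exact hadj
  calc (Finset.univ.filter P).card ≤ (A.biUnion (fun v => G.incidenceFinset v)).card :=
      card_le_card hsub
    _ ≤ ∑ v ∈ A, (G.incidenceFinset v).card := card_biUnion_le
    _ ≤ ∑ _v ∈ A, maxDeg G := by
        refine Finset.sum_le_sum fun v _ => ?_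
        rw [card_incidenceFinset_eq_degree]
        exact degree_le_maxDeg G v
    _ = A.card * maxDeg G := by rw [Finset.sum_const, smul_eq_mul]

lemma cutWidth_union_le (B B' A : Finset V)
    (h : ∀ ⦃x y : V⦄, G.Adj x y → x ∈ B' → y ∉ B ∪ B' → (x ∈ A ∨ y ∈ A)) :
    cutWidth G (B ∪ B') ≤ cutWidth G B + A.card * maxDeg G := by
  rw [cutWidth_eq_card, cutWidth_eq_card]
  set Q : Sym2 V → Prop :=
    fun e => ∃ x y, G.Adj x y ∧ x ∈ B' ∧ y ∉ B ∪ B' ∧ e = s(x, y) with hQ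
  have hsub : Finset.univ.filter
      (fun e : Sym2 V => ∃ x y, G.Adj x y ∧ x ∈ B ∪ B' ∧ y ∉ B ∪ B' ∧ e = s(x, y)) ⊆
      Finset.univ.filter
        (fun e : Sym2 V => ∃ x y, G.Adj x y ∧ x ∈ B ∧ y ∉ B ∧ e = s(x, y)) ∪
      Finset.univ.filter Q := by
    intro e he
    obtain ⟨x, y, hadj, hx, hy, rfl⟩ := (mem_filter.mp he).2
    rcases mem_union.mp hx with hxB | hxB'
    · exact mem_union_left _ (mem_filter.mpr ⟨mem_univ _,
        x, y, hadj, hxB, fun hc => hy (mem_union_left _ hc), rfl⟩)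
    · exact mem_union_right _ (mem_filter.mpr ⟨mem_univ _, x, y, hadj, hxB', hy, rfl⟩)
  calc _ ≤ _ := card_le_card hsub
    _ ≤ _ + (Finset.univ.filter Q).card := card_union_le _ _
    _ ≤ _ + A.card * maxDeg G := by
        refine Nat.add_le_add_left ?_ _
        have hQ' := card_filter_le_of_incident G A Q (by
          rintro e ⟨x, y, hadj, hx, hy, rfl⟩
          exact ⟨x, y, hadj, rfl, h hadj hx hy⟩)
        rw [Finset.filter_congr_decidable] at hQ' ⊢
        exact hQ'


end Count

end MinBisection

/-- (Approximate cut.) Let `G` be a graph on `n` vertices and `(T, X)` a tree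
decomposition of `G` of width at most `t - 1`. For every integer `1 ≤ m ≤ n` and every real
`0 < c < 1`, there is a cut `(B, W)` in `G` with `c m < |B| ≤ m` and
`e_G(B, W) ≤ ⌈log₂(1/(1-c))⌉ t Δ(G)`. -/
theorem MinBisection.approx_cut {V ι : Type*} [Fintype V] [Fintype ι]
    (G : SimpleGraph V) (T : SimpleGraph ι) (X : ι → Finset V) (t : ℕ)
    (hTD : IsTreeDecomp G T X) (hwidth : ∀ i, (X i).card ≤ t)
    (m : ℕ) (hm1 : 1 ≤ m) (hmn : m ≤ Fintype.card V)
    (c : ℝ) (hc0 : 0 < c) (hc1 : c < 1) :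
    ∃ B : Finset V, c * (m : ℝ) < (B.card : ℝ) ∧ B.card ≤ m ∧
      cutWidth G B ≤ ⌈Real.logb 2 (1 / (1 - c))⌉₊ * t * maxDeg G := by
  classical
  open Finset in
  set K := ⌈Real.logb 2 (1 / (1 - c))⌉₊ with hK
  have main : ∀ k : ℕ, ∃ B : Finset V, B.card ≤ m ∧ cutWidth G B ≤ k * (t * maxDeg G) ∧
      (B.card = m ∨ ((m : ℝ) - B.card + 1 ≤ ((m : ℝ) + 1) / 2 ^ k)) := by
    intro k
    induction k with
    | zero =>
      refine ⟨∅, Nat.zero_le m, ?_, Or.inr ?_⟩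
      · rw [cutWidth_empty]
        exact Nat.zero_le _
      · simp
    | succ k ih =>
      obtain ⟨B₀, hB₀m, hB₀cut, hB₀def⟩ := ih
      by_cases hBm : B₀.card = m
      · exact ⟨B₀, hB₀m, le_trans hB₀cut (Nat.mul_le_mul_right _ (Nat.le_succ k)), Or.inl hBm⟩
      · set d := m - B₀.card with hd
        have hd1 : 1 ≤ d := by omega
        set U := B₀ᶜ with hU
        have hUcard : U.card = Fintype.card V - B₀.card := by rw [hU, Finset.card_compl]
        have hdU : d ≤ U.card := by omega
        obtain ⟨B', i, hB'U, hB'low, hB'up, hB'cut⟩ :=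
          MBAux.inner_rel (T := T) (Y := fun i => X i ∩ U) (U := U) G hTD.isTree
            (fun _ => Finset.inter_subset_right)
            (fun v hv => by
              obtain ⟨j, hj⟩ := hTD.mem_cluster v
              exact ⟨j, Finset.mem_inter.mpr ⟨hj, hv⟩⟩)
            (fun x y hxy hxU hyU => by
              obtain ⟨k', hk1, hk2⟩ := hTD.edge_cluster hxy
              exact ⟨k', Finset.mem_inter.mpr ⟨hk1, hxU⟩, Finset.mem_inter.mpr ⟨hk2, hyU⟩⟩)
            (fun a b p hp h hh => by
              intro u hu
              have h1 := Finset.mem_inter.mp hu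
              have h2 := Finset.mem_inter.mp h1.1
              have h3 := Finset.mem_inter.mp h1.2
              exact Finset.mem_inter.mpr
                ⟨hTD.inter_subset p hp h hh (Finset.mem_inter.mpr ⟨h2.1, h3.1⟩), h2.2⟩)
            d hd1 hdU
        have hdisj : Disjoint B₀ B' := by
          rw [Finset.disjoint_left]
          intro a ha hab
          exact (Finset.mem_compl.mp (hB'U hab)) ha
        have hcard : (B₀ ∪ B').card = B₀.card + B'.card := Finset.card_union_of_disjoint hdisj
        refine ⟨B₀ ∪ B', by omega, ?_, Or.inr ?_⟩
        · have hstep := cutWidth_union_le G B₀ B' (X i ∩ U) (fun x y hxy hx hy => by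
            have hyU : y ∈ U := Finset.mem_compl.mpr (fun hc => hy (Finset.mem_union_left _ hc))
            have hyB' : y ∉ B' := fun hc => hy (Finset.mem_union_right _ hc)
            exact hB'cut hxy hx hyU hyB')
          refine le_trans hstep ?_
          have hXU : (X i ∩ U).card * maxDeg G ≤ t * maxDeg G :=
            Nat.mul_le_mul_right _ (le_trans (Finset.card_le_card Finset.inter_subset_left)
              (hwidth i))
          calc cutWidth G B₀ + (X i ∩ U).card * maxDeg G
              ≤ k * (t * maxDeg G) + t * maxDeg G := Nat.add_le_add hB₀cut hXU
            _ = (k + 1) * (t * maxDeg G) := by ring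
        · rcases hB₀def with h | h
          · exact absurd h hBm
          have hc1' : (B₀.card : ℝ) ≤ (m : ℝ) := Nat.cast_le.mpr hB₀m
          have hd' : (d : ℝ) = (m : ℝ) - (B₀.card : ℝ) := by
            rw [hd, Nat.cast_sub hB₀m]
          have hlow' : (d : ℝ) + 1 ≤ 2 * (B'.card : ℝ) := by
            have : d + 1 ≤ 2 * B'.card := hB'low
            exact_mod_cast this
          have hpow : ((m : ℝ) + 1) / 2 ^ (k + 1) = (((m : ℝ) + 1) / 2 ^ k) / 2 := by
            rw [pow_succ]
            ring
          rw [hcard, hpow]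
          push_cast
          rw [hd'] at hlow'
          linarith [h]
  obtain ⟨B, hBm, hBcut, hBdef⟩ := main K
  have hm' : (1 : ℝ) ≤ (m : ℝ) := by exact_mod_cast hm1
  refine ⟨B, ?_, hBm, ?_⟩
  · rcases hBdef with h | h
    · rw [h]
      nlinarith
    · have h1c : (0 : ℝ) < 1 - c := by linarith
      have hpos : (0 : ℝ) < 1 / (1 - c) := by positivity
      have hle : Real.logb 2 (1 / (1 - c)) ≤ (K : ℝ) := Nat.le_ceil _
      have hpow : 1 / (1 - c) ≤ (2 : ℝ) ^ K := by
        calc (1 : ℝ) / (1 - c) = 2 ^ Real.logb 2 (1 / (1 - c)) :=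
              (Real.rpow_logb two_pos (by norm_num) hpos).symm
          _ ≤ 2 ^ (K : ℝ) := Real.rpow_le_rpow_of_exponent_le one_le_two hle
          _ = 2 ^ K := by rw [Real.rpow_natCast]
      have h2K : (0 : ℝ) < 2 ^ K := by positivity
      have h2 : ((m : ℝ) + 1) / 2 ^ K ≤ ((m : ℝ) + 1) * (1 - c) := by
        rw [div_le_iff₀ h2K]
        have hpow' := hpow
        rw [div_le_iff₀ h1c] at hpow'
        nlinarith
      nlinarith [h, h2]
  · calc cutWidth G B ≤ K * (t * maxDeg G) := hBcut
      _ = K * t * maxDeg G := (mul_assoc _ _ _).symm
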